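/- Let A and J be Hermitian k×k complex matrices, and let a be a real number with |a| ≥ 2 and ‖A‖ ≤ 1 (so that A − a·I is invertible); assume also that J + a·I is invertible. If |det((A − a·I)⁻¹ + (J + a·I)⁻¹)| ≤ (1/(16|a|)) · ((|a| − 1)/(2(|a| + 1)²))^{k−1}, then at least one of the following holds: (i) (2(|a| + 1)²)^{−k} · |det(A + J)| ≤ |det((A − a·I)⁻¹ + (J + a·I)⁻¹)|; or (ii) A + J is invertible and (1/(16|a|)) · (2(|a| + 1)² · ‖(A + J)⁻¹‖)^{1−k} ≤ |det((A − a·I)⁻¹ + (J + a·I)⁻¹)|. -/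

import Mathlib

open Matrix

/-- The operator (spectral) norm of a matrix, i.e. the norm of the induced operator
between Euclidean spaces. -/
noncomputable def matNorm {m n : Type*} [Fintype m] [Fintype n] [DecidableEq n]
    (M : Matrix m n ℂ) : ℝ :=
  ‖LinearMap.toContinuousLinearMap (Matrix.toEuclideanLin M)‖

open scoped Matrix.Norms.L2Operator

namespace Stmt15Aux

/-- Euclidean norm of a complex vector. -/
noncomputable def eN {k : ℕ} (x : Fin k → ℂ) : ℝ := ‖(WithLp.equiv 2 (Fin k → ℂ)).symm x‖

lemma eN_nonneg {k : ℕ} (x : Fin k → ℂ) : 0 ≤ eN x := norm_nonneg _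

lemma eN_mulVec_le {k : ℕ} (M : Matrix (Fin k) (Fin k) ℂ) (x : Fin k → ℂ) :
    eN (M *ᵥ x) ≤ ‖M‖ * eN x := M.l2_opNorm_mulVec ((WithLp.equiv 2 (Fin k → ℂ)).symm x)

lemma eN_smul {k : ℕ} (c : ℂ) (x : Fin k → ℂ) : eN (c • x) = ‖c‖ * eN x := by
  unfold eN
  rw [show (WithLp.equiv 2 (Fin k → ℂ)).symm (c • x)
      = c • (WithLp.equiv 2 (Fin k → ℂ)).symm x from rfl, norm_smul]

lemma eN_sub_le {k : ℕ} (x y : Fin k → ℂ) : eN (x - y) ≤ eN x + eN y :=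
  norm_sub_le ((WithLp.equiv 2 (Fin k → ℂ)).symm x) ((WithLp.equiv 2 (Fin k → ℂ)).symm y)

lemma eN_pos {k : ℕ} {x : Fin k → ℂ} (h : x ≠ 0) : 0 < eN x := by
  unfold eN
  rw [norm_pos_iff]
  exact fun h0 => h ((WithLp.equiv 2 (Fin k → ℂ)).symm.injective (h0.trans rfl))

lemma eN_basis {k : ℕ} {X : Matrix (Fin k) (Fin k) ℂ} (hX : X.IsHermitian) (i : Fin k) :
    eN ⇑(hX.eigenvectorBasis i) = 1 := hX.eigenvectorBasis.orthonormal.1 i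

lemma norm_le_of_eN {k : ℕ} (M : Matrix (Fin k) (Fin k) ℂ) (c : ℝ) (hc : 0 ≤ c)
    (h : ∀ x, eN (M *ᵥ x) ≤ c * eN x) : ‖M‖ ≤ c := by
  rw [Matrix.l2_opNorm_def]
  exact ContinuousLinearMap.opNorm_le_bound _ hc fun x => h x

lemma dot_self_eq {k : ℕ} (x : Fin k → ℂ) : star x ⬝ᵥ x = ((eN x ^ 2 : ℝ) : ℂ) := by
  have h := EuclideanSpace.inner_toLp_toLp (𝕜 := ℂ) x x
  rw [inner_self_eq_norm_sq_to_K] at h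
  rw [dotProduct_comm, ← h]; norm_cast

lemma dot_conjTranspose_mul_self {k : ℕ} (M : Matrix (Fin k) (Fin k) ℂ) (u : Fin k → ℂ) :
    star u ⬝ᵥ ((Mᴴ * M) *ᵥ u) = ((eN (M *ᵥ u) ^ 2 : ℝ) : ℂ) := by
  rw [← Matrix.mulVec_mulVec, Matrix.dotProduct_mulVec, ← Matrix.star_mulVec, dot_self_eq]

lemma exists_eigen_le {k : ℕ} (hk : k ≠ 0) {H : Matrix (Fin k) (Fin k) ℂ}
    (hH : H.IsHermitian) (v : Fin k → ℂ) (hv : star v ⬝ᵥ v = 1) :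
    ∃ i, hH.eigenvalues i ≤ (star v ⬝ᵥ (H *ᵥ v)).re := by
  set U : Matrix (Fin k) (Fin k) ℂ := (hH.eigenvectorUnitary : Matrix (Fin k) (Fin k) ℂ) with hU
  set y : Fin k → ℂ := star U *ᵥ v with hy
  have hstar : star v ᵥ* U = star y := by
    rw [hy, Matrix.star_mulVec, Matrix.star_eq_conjTranspose, Matrix.conjTranspose_conjTranspose]
  have hUU : U * star U = 1 := Matrix.mem_unitaryGroup_iff.mp hH.eigenvectorUnitary.2
  have hyy : ∑ i, Complex.normSq (y i) = 1 := by
    have h1 : star y ⬝ᵥ y = (1 : ℂ) := by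
      rw [← hstar, ← Matrix.dotProduct_mulVec, Matrix.mulVec_mulVec, hUU, Matrix.one_mulVec, hv]
    have h2 : star y ⬝ᵥ y = ((∑ i, Complex.normSq (y i) : ℝ) : ℂ) := by
      simp only [dotProduct, Pi.star_apply, Complex.ofReal_sum]
      refine Finset.sum_congr rfl fun i _ => ?_
      rw [Complex.normSq_eq_conj_mul_self]; rfl
    rw [h2] at h1
    exact_mod_cast h1
  have hexp : star v ⬝ᵥ (H *ᵥ v)
      = ∑ i, ((hH.eigenvalues i : ℂ) * (Complex.normSq (y i) : ℂ)) := by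
    conv_lhs => rw [hH.spectral_theorem, Unitary.conjStarAlgAut_apply]
    rw [← Matrix.mulVec_mulVec, ← Matrix.mulVec_mulVec, Matrix.dotProduct_mulVec, hstar,
      ← hy]
    simp only [dotProduct, Pi.star_apply, Matrix.mulVec_diagonal, Function.comp_apply]
    refine Finset.sum_congr rfl fun i _ => ?_
    simp only [Complex.star_def]
    have hco : (RCLike.ofReal (hH.eigenvalues i) : ℂ) = ((hH.eigenvalues i : ℝ) : ℂ) := rfl
    rw [hco, Complex.normSq_eq_conj_mul_self]; ring
  obtain ⟨i₀, -, hmin⟩ := Finset.exists_min_image Finset.univ hH.eigenvalues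
    ⟨⟨0, Nat.pos_of_ne_zero hk⟩, Finset.mem_univ _⟩
  refine ⟨i₀, ?_⟩
  have hre : (star v ⬝ᵥ (H *ᵥ v)).re = ∑ i, hH.eigenvalues i * Complex.normSq (y i) := by
    rw [hexp, Complex.re_sum]
    refine Finset.sum_congr rfl fun i _ => ?_
    norm_cast
  rw [hre]
  calc hH.eigenvalues i₀ = ∑ i, hH.eigenvalues i₀ * Complex.normSq (y i) := by
        rw [← Finset.mul_sum, hyy, mul_one]
    _ ≤ ∑ i, hH.eigenvalues i * Complex.normSq (y i) :=
        Finset.sum_le_sum fun i _ => mul_le_mul_of_nonneg_right (hmin i (Finset.mem_univ _))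
          (Complex.normSq_nonneg _)

lemma abs_det_le {k : ℕ} (hk : k ≠ 0) (M : Matrix (Fin k) (Fin k) ℂ) (v : Fin k → ℂ)
    (hv : eN v = 1) : ‖M.det‖ ≤ ‖M‖ ^ (k - 1) * eN (M *ᵥ v) := by
  have hH : (Mᴴ * M).IsHermitian := Matrix.isHermitian_conjTranspose_mul_self M
  set lam : Fin k → ℝ := hH.eigenvalues with hlam
  have heig : ∀ i, lam i = eN (M *ᵥ ⇑(hH.eigenvectorBasis i)) ^ 2 := by
    intro i
    rw [hlam, hH.eigenvalues_eq, dot_conjTranspose_mul_self]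
    exact Complex.ofReal_re _
  have hnn : ∀ i, 0 ≤ lam i := fun i => by rw [heig]; positivity
  have hub : ∀ i, lam i ≤ ‖M‖ ^ 2 := by
    intro i
    rw [heig]
    have h1 := eN_mulVec_le M ⇑(hH.eigenvectorBasis i)
    rw [eN_basis hH i, mul_one] at h1
    have h0 := eN_nonneg (M *ᵥ ⇑(hH.eigenvectorBasis i))
    nlinarith
  have hdet2 : ‖M.det‖ ^ 2 = ∏ i, lam i := by
    have h1 : (Mᴴ * M).det = ∏ i, (lam i : ℂ) := hH.det_eq_prod_eigenvalues
    have h2 : (Mᴴ * M).det = (starRingEnd ℂ) M.det * M.det := by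
      rw [Matrix.det_mul, Matrix.det_conjTranspose]; rfl
    have h3 : ‖(starRingEnd ℂ) M.det * M.det‖ = ‖M.det‖ ^ 2 := by
      rw [norm_mul, Complex.norm_conj, sq]
    rw [← h3, ← h2, h1, norm_prod]
    refine Finset.prod_congr rfl fun i _ => ?_
    rw [Complex.norm_real, Real.norm_eq_abs, abs_of_nonneg (hnn i)]
  have hv' : star v ⬝ᵥ v = 1 := by rw [dot_self_eq, hv]; norm_num
  obtain ⟨i₀, hi₀⟩ := exists_eigen_le hk hH v hv'
  have hi₀' : lam i₀ ≤ eN (M *ᵥ v) ^ 2 := by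
    rw [dot_conjTranspose_mul_self, Complex.ofReal_re] at hi₀; exact hi₀
  have hprod : ∏ i, lam i ≤ eN (M *ᵥ v) ^ 2 * (‖M‖ ^ 2) ^ (k - 1) := by
    rw [← Finset.mul_prod_erase Finset.univ lam (Finset.mem_univ i₀)]
    have hc : (Finset.univ.erase i₀).card = k - 1 := by
      rw [Finset.card_erase_of_mem (Finset.mem_univ i₀), Finset.card_univ, Fintype.card_fin]
    have hrest : ∏ i ∈ Finset.univ.erase i₀, lam i ≤ (‖M‖ ^ 2) ^ (k - 1) := by
      rw [← hc, ← Finset.prod_const]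
      exact Finset.prod_le_prod (fun i _ => hnn i) (fun i _ => hub i)
    have hrest0 : 0 ≤ ∏ i ∈ Finset.univ.erase i₀, lam i :=
      Finset.prod_nonneg fun i _ => hnn i
    have := eN_nonneg (M *ᵥ v)
    nlinarith
  have hsq : ‖M.det‖ ^ 2 ≤ (‖M‖ ^ (k - 1) * eN (M *ᵥ v)) ^ 2 := by
    rw [hdet2]
    calc ∏ i, lam i ≤ eN (M *ᵥ v) ^ 2 * (‖M‖ ^ 2) ^ (k - 1) := hprod
      _ = (‖M‖ ^ (k - 1) * eN (M *ᵥ v)) ^ 2 := by rw [mul_pow, ← pow_mul, ← pow_mul]; ring_nf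
  have h0 : (0:ℝ) ≤ ‖M.det‖ := norm_nonneg _
  have h1 : (0:ℝ) ≤ ‖M‖ ^ (k - 1) * eN (M *ᵥ v) := by
    have := eN_nonneg (M *ᵥ v); positivity
  nlinarith

lemma herm_mulVec_basis {k : ℕ} {X : Matrix (Fin k) (Fin k) ℂ} (hX : X.IsHermitian) (i : Fin k) :
    X *ᵥ ⇑(hX.eigenvectorBasis i) = ((hX.eigenvalues i : ℝ) : ℂ) • ⇑(hX.eigenvectorBasis i) := by
  rw [hX.mulVec_eigenvectorBasis i]
  funext j
  simp [Complex.real_smul]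

lemma herm_abs_det_le {k : ℕ} {X : Matrix (Fin k) (Fin k) ℂ} (hX : X.IsHermitian) {b : ℝ}
    (hb : ∀ i, |hX.eigenvalues i| ≤ b) : ‖X.det‖ ≤ b ^ k := by
  rw [hX.det_eq_prod_eigenvalues, norm_prod]
  calc ∏ i, ‖((hX.eigenvalues i : ℝ) : ℂ)‖
      = ∏ i, |hX.eigenvalues i| :=
        Finset.prod_congr rfl fun i _ => by rw [Complex.norm_real, Real.norm_eq_abs]
    _ ≤ ∏ _i : Fin k, b := Finset.prod_le_prod (fun i _ => abs_nonneg _) (fun i _ => hb i)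
    _ = b ^ k := by rw [Finset.prod_const, Finset.card_univ, Fintype.card_fin]

lemma herm_exists_eig_gt {k : ℕ} {X : Matrix (Fin k) (Fin k) ℂ} (hX : X.IsHermitian) {b : ℝ}
    (h : b ^ k < ‖X.det‖) : ∃ i, b < |hX.eigenvalues i| := by
  by_contra hcon
  push_neg at hcon
  exact absurd (herm_abs_det_le hX hcon) (not_le.mpr h)

end Stmt15Aux

open Stmt15Aux

set_option maxHeartbeats 2000000 in
theorem stmt15 {k : ℕ} (A J : Matrix (Fin k) (Fin k) ℂ)
    (hA : A.IsHermitian) (hJ : J.IsHermitian) (a : ℝ) (ha : 2 ≤ |a|)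
    (hAn : matNorm A ≤ 1) (hJa : IsUnit (J + (a : ℂ) • 1))
    (hdet : ‖((A - (a : ℂ) • 1)⁻¹ + (J + (a : ℂ) • 1)⁻¹).det‖ ≤
      1 / (16 * |a|) * ((|a| - 1) / (2 * (|a| + 1) ^ 2)) ^ (k - 1)) :
    (2 * (|a| + 1) ^ 2) ^ (-(k : ℤ)) * ‖(A + J).det‖ ≤
        ‖((A - (a : ℂ) • 1)⁻¹ + (J + (a : ℂ) • 1)⁻¹).det‖ ∨
      (IsUnit (A + J) ∧
        1 / (16 * |a|) * (2 * (|a| + 1) ^ 2 * matNorm (A + J)⁻¹) ^ (1 - (k : ℤ)) ≤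
          ‖((A - (a : ℂ) • 1)⁻¹ + (J + (a : ℂ) • 1)⁻¹).det‖) := by
  classical
  have hα0 : (0:ℝ) < |a| := by linarith
  have hAn' : ‖A‖ ≤ 1 := hAn
  rcases Nat.eq_zero_or_pos k with hk0 | hkpos
  · exfalso
    subst hk0
    rw [Matrix.det_isEmpty, norm_one] at hdet
    norm_num at hdet
    have h5 := mul_le_mul_of_nonneg_left hdet hα0.le
    rw [mul_one, ← mul_assoc, mul_inv_cancel₀ hα0.ne', one_mul] at h5
    linarith
  obtain ⟨k', rfl⟩ : ∃ k', k = k' + 1 := ⟨k - 1, by omega⟩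
  have hk1 : k' + 1 ≠ 0 := Nat.succ_ne_zero k'
  simp only [Nat.add_sub_cancel] at hdet
  set C : Matrix (Fin (k'+1)) (Fin (k'+1)) ℂ := A - (a:ℂ) • 1 with hCdef
  set D : Matrix (Fin (k'+1)) (Fin (k'+1)) ℂ := J + (a:ℂ) • 1 with hDdef
  have hsm : ((a:ℂ) • (1 : Matrix (Fin (k'+1)) (Fin (k'+1)) ℂ)).IsHermitian := by
    simp [Matrix.IsHermitian, Matrix.conjTranspose_smul, Complex.star_def, Complex.conj_ofReal]
  have hCher : C.IsHermitian := hA.sub hsm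
  have hDher : D.IsHermitian := hJ.add hsm
  have hCdet : IsUnit C.det := by
    rw [isUnit_iff_ne_zero]
    intro h0
    obtain ⟨v, hv0, hv⟩ := (Matrix.exists_mulVec_eq_zero_iff).mpr h0
    have hAv : A *ᵥ v = (a:ℂ) • v := by
      have h1 : C *ᵥ v = A *ᵥ v - (a:ℂ) • v := by
        rw [hCdef, Matrix.sub_mulVec, Matrix.smul_mulVec, Matrix.one_mulVec]
      rw [hv] at h1
      exact (sub_eq_zero.mp h1.symm)
    have h2 : eN (A *ᵥ v) ≤ 1 * eN v := by
      refine le_trans (eN_mulVec_le A v) ?_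
      exact mul_le_mul_of_nonneg_right hAn' (eN_nonneg v)
    have h3 : eN (A *ᵥ v) = |a| * eN v := by
      rw [hAv, eN_smul, Complex.norm_real, Real.norm_eq_abs]
    have h4 : 0 < eN v := eN_pos hv0
    have h6 : 2 * eN v ≤ |a| * eN v :=
      mul_le_mul_of_nonneg_right ha h4.le
    linarith only [h2, h3, h4, h6]
  have hDdet : IsUnit D.det := (Matrix.isUnit_iff_isUnit_det D).mp hJa
  set c := ‖C.det‖ with hc
  set d := ‖D.det‖ with hd
  set G := ‖(A+J).det‖ with hG
  set T := ‖(C⁻¹ + D⁻¹).det‖ with hT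
  have hc0 : 0 < c := norm_pos_iff.mpr hCdet.ne_zero
  have hd0 : 0 < d := norm_pos_iff.mpr hDdet.ne_zero
  have hCD : C + D = A + J := by rw [hCdef, hDdef]; abel
  have hBeq : C⁻¹ + D⁻¹ = C⁻¹ * (A + J) * D⁻¹ := by
    have h1 : C⁻¹ * (C + D) * D⁻¹ = D⁻¹ + C⁻¹ := by
      rw [Matrix.mul_add, Matrix.add_mul, Matrix.nonsing_inv_mul C hCdet, Matrix.one_mul,
        Matrix.mul_assoc, Matrix.mul_nonsing_inv D hDdet, Matrix.mul_one]
    rw [← hCD, h1]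
    exact add_comm _ _
  have e1 : (C⁻¹).det = C.det⁻¹ := by rw [Matrix.det_nonsing_inv, Ring.inverse_eq_inv']
  have e2 : (D⁻¹).det = D.det⁻¹ := by rw [Matrix.det_nonsing_inv, Ring.inverse_eq_inv']
  have hdetB : T = G * c⁻¹ * d⁻¹ := by
    rw [hT, hBeq, Matrix.det_mul, Matrix.det_mul, e1, e2,
      norm_mul, norm_mul, norm_inv, norm_inv, ← hG, ← hc, ← hd]
    ring
  have hGTcd : G = T * c * d := by
    rw [hdetB]; field_simp
  have hceig : ∀ i, |hCher.eigenvalues i| ≤ |a| + 1 := by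
    intro i
    have hu := herm_mulVec_basis hCher i
    have hA_u : A *ᵥ ⇑(hCher.eigenvectorBasis i)
        = ((hCher.eigenvalues i + a : ℝ) : ℂ) • ⇑(hCher.eigenvectorBasis i) := by
      have h1 : A = C + (a:ℂ) • 1 := by rw [hCdef]; abel
      rw [h1, Matrix.add_mulVec, Matrix.smul_mulVec, Matrix.one_mulVec, hu]
      push_cast
      rw [← add_smul]
    have h2 : eN (A *ᵥ ⇑(hCher.eigenvectorBasis i)) = |hCher.eigenvalues i + a| := by
      rw [hA_u, eN_smul, eN_basis hCher i, mul_one, Complex.norm_real, Real.norm_eq_abs]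
    have h3 : eN (A *ᵥ ⇑(hCher.eigenvectorBasis i)) ≤ 1 := by
      refine le_trans (eN_mulVec_le A _) ?_
      rw [eN_basis hCher i, mul_one]; exact hAn'
    have habs : |hCher.eigenvalues i| ≤ |hCher.eigenvalues i + a| + |a| := by
      have := abs_add_le (hCher.eigenvalues i + a) (-a)
      simpa using this
    linarith [h2 ▸ h3]
  have hcle : c ≤ (|a| + 1)^(k'+1) := herm_abs_det_le hCher hceig
  set P := 2 * (|a| + 1)^2 with hP
  have hP0 : (0:ℝ) < P := by rw [hP]; positivity
  by_cases hcase : G ≤ P^(k'+1) * T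
  · left
    have hzp : (P:ℝ) ^ (-(((k'+1):ℕ) : ℤ)) = (P ^ (k'+1))⁻¹ := by
      rw [_root_.zpow_neg, zpow_natCast]
    rw [hzp, inv_mul_le_iff₀ (by positivity)]
    exact hcase
  · right
    push_neg at hcase
    have hT0 : 0 < T := by
      rcases lt_or_eq_of_le (norm_nonneg ((C⁻¹ + D⁻¹).det)) with h | h
      · exact h
      · exfalso
        have hTz : T = 0 := h.symm
        have : G = 0 := by rw [hGTcd, hTz]; ring
        rw [this, hTz] at hcase
        simp at hcase
    have hG0 : 0 < G := lt_trans (by positivity) hcase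
    have hAJdet : IsUnit (A + J).det := by
      rw [isUnit_iff_ne_zero]
      intro h0
      have : G = 0 := by rw [hG, h0, norm_zero]
      linarith
    refine ⟨(Matrix.isUnit_iff_isUnit_det _).mpr hAJdet, ?_⟩
    set N := matNorm (A+J)⁻¹ with hNdef
    have hNnorm : N = ‖(A+J)⁻¹‖ := rfl
    have hNn : 0 ≤ N := by rw [hNnorm]; exact norm_nonneg _
    have hN0 : 0 < N := by
      rw [hNnorm, norm_pos_iff]
      intro h0
      have h1 : (A+J)⁻¹ * (A+J) = 1 := Matrix.nonsing_inv_mul _ hAJdet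
      rw [h0, Matrix.zero_mul] at h1
      have := congr_fun (congr_fun h1 ⟨0, Nat.succ_pos k'⟩) ⟨0, Nat.succ_pos k'⟩
      simp [Matrix.one_apply] at this
    have hcd : P^(k'+1) < c * d := by
      have h1 := hcase
      rw [hGTcd] at h1
      have h2 : P ^ (k'+1) * T < (c*d) * T := by
        rw [show (c*d)*T = T*c*d from by ring]; exact h1
      exact lt_of_mul_lt_mul_right h2 hT0.le
    have hdgt : (2*(|a|+1))^(k'+1) < d := by
      have hPfac : P^(k'+1) = (|a|+1)^(k'+1) * (2*(|a|+1))^(k'+1) := by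
        rw [← mul_pow, hP]; ring_nf
      have h2 : c * d ≤ (|a|+1)^(k'+1) * d := mul_le_mul_of_nonneg_right hcle hd0.le
      have h3 : (|a|+1)^(k'+1) * (2*(|a|+1))^(k'+1) < (|a|+1)^(k'+1) * d := by
        rw [← hPfac]; linarith only [hcd, h2]
      exact lt_of_mul_lt_mul_left h3 (by positivity)
    obtain ⟨i, hi⟩ := herm_exists_eig_gt hDher hdgt
    clear_value T c d G N
    set u : Fin (k'+1) → ℂ := ⇑(hDher.eigenvectorBasis i) with hu
    set lam := hDher.eigenvalues i with hlamd
    have hDu : D *ᵥ u = ((lam : ℝ):ℂ) • u := herm_mulVec_basis hDher i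
    have hJu : J *ᵥ u = ((lam - a : ℝ):ℂ) • u := by
      have h1 : J = D - (a:ℂ) • 1 := by rw [hDdef]; abel
      rw [h1, Matrix.sub_mulVec, Matrix.smul_mulVec, Matrix.one_mulVec, hDu]
      push_cast
      rw [← sub_smul]
    set z := (A + J) *ᵥ u with hz
    have hzval : z = A *ᵥ u + ((lam - a:ℝ):ℂ) • u := by rw [hz, Matrix.add_mulVec, hJu]
    have huN : eN u = 1 := eN_basis hDher i
    have hAu : eN (A *ᵥ u) ≤ 1 := by
      refine le_trans (eN_mulVec_le A u) ?_
      rw [huN, mul_one]; exact hAn'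
    have hzlow : |a| + 1 ≤ eN z := by
      have h1 : eN (((lam - a:ℝ):ℂ) • u) = |lam - a| := by
        rw [eN_smul, huN, mul_one, Complex.norm_real, Real.norm_eq_abs]
      have h2 : eN (((lam-a:ℝ):ℂ) • u) ≤ eN z + eN (A *ᵥ u) := by
        have heq : ((lam - a:ℝ):ℂ) • u = z - A *ᵥ u := by rw [hzval]; abel
        rw [heq]; exact eN_sub_le _ _
      have h3 : |lam| - |a| ≤ |lam - a| := abs_sub_abs_le_abs_sub _ _
      linarith only [h1, h2, h3, hi, hAu]
    have hz0 : 0 < eN z := by linarith only [hzlow, abs_nonneg a]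
    set s : ℝ := (eN z)⁻¹ with hs
    have hs0 : 0 ≤ s := by rw [hs]; positivity
    set v : Fin (k'+1) → ℂ := ((s:ℝ):ℂ) • z with hv
    have hv1 : eN v = 1 := by
      rw [hv, eN_smul, Complex.norm_real, Real.norm_eq_abs, abs_of_nonneg hs0, hs]
      exact inv_mul_cancel₀ hz0.ne'
    set M0 := D * (A+J)⁻¹ with hM0
    have e3 : ((A+J)⁻¹).det = (A+J).det⁻¹ := by
      rw [Matrix.det_nonsing_inv, Ring.inverse_eq_inv']
    have hM0det : ‖M0.det‖ = d * G⁻¹ := by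
      rw [hM0, Matrix.det_mul, e3, norm_mul, norm_inv, ← hd, ← hG]
    have hM0eq : M0 = 1 - C * (A+J)⁻¹ := by
      have h1 : D = (A+J) - C := by rw [← hCD]; abel
      rw [hM0, h1, Matrix.sub_mul, Matrix.mul_nonsing_inv _ hAJdet]
    have hCnorm : ‖C‖ ≤ |a| + 1 := by
      apply norm_le_of_eN _ _ (by positivity)
      intro x
      have h1 : C *ᵥ x = A *ᵥ x - (a:ℂ) • x := by
        rw [hCdef, Matrix.sub_mulVec, Matrix.smul_mulVec, Matrix.one_mulVec]
      rw [h1]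
      calc eN (A *ᵥ x - (a:ℂ)•x) ≤ eN (A*ᵥx) + eN ((a:ℂ)•x) := eN_sub_le _ _
        _ ≤ 1 * eN x + |a| * eN x := by
            refine add_le_add (le_trans (eN_mulVec_le A x)
              (mul_le_mul_of_nonneg_right hAn' (eN_nonneg x))) ?_
            rw [eN_smul, Complex.norm_real, Real.norm_eq_abs]
        _ = (|a|+1) * eN x := by ring
    set Q := 1 + (|a|+1) * N with hQ
    have hQ0 : 0 ≤ Q := by
      have h7 : 0 ≤ (|a|+1) * N := mul_nonneg (by positivity) hNn
      rw [hQ]; linarith only [h7]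
    have hM0norm : ‖M0‖ ≤ Q := by
      apply norm_le_of_eN _ _ hQ0
      intro x
      rw [hM0eq, Matrix.sub_mulVec, Matrix.one_mulVec, ← Matrix.mulVec_mulVec]
      have h2 : eN (C *ᵥ ((A+J)⁻¹ *ᵥ x)) ≤ (|a|+1) * (N * eN x) := by
        refine le_trans (eN_mulVec_le C _) ?_
        refine mul_le_mul hCnorm ?_ (eN_nonneg _) (by positivity)
        rw [hNnorm]; exact eN_mulVec_le _ x
      calc eN (x - C *ᵥ ((A+J)⁻¹ *ᵥ x)) ≤ eN x + eN (C *ᵥ ((A+J)⁻¹ *ᵥ x)) := eN_sub_le _ _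
        _ ≤ eN x + (|a|+1) * (N * eN x) := by linarith only [h2]
        _ = Q * eN x := by rw [hQ]; ring
    have hM0v : eN (M0 *ᵥ v) ≤ 2 := by
      have h1 : (A+J)⁻¹ *ᵥ z = u := by
        rw [hz, Matrix.mulVec_mulVec, Matrix.nonsing_inv_mul _ hAJdet, Matrix.one_mulVec]
      have h2 : M0 *ᵥ v = v - ((s:ℝ):ℂ) • (C *ᵥ u) := by
        rw [hM0eq, Matrix.sub_mulVec, Matrix.one_mulVec, ← Matrix.mulVec_mulVec, hv,
          Matrix.mulVec_smul, h1, Matrix.mulVec_smul]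
      rw [h2]
      have h3 : eN (C *ᵥ u) ≤ |a|+1 := by
        refine le_trans (eN_mulVec_le C u) ?_
        rw [huN, mul_one]; exact hCnorm
      have h4 : s ≤ (|a|+1)⁻¹ := by
        rw [hs]
        exact inv_anti₀ (by positivity) hzlow
      have h5 : s * (|a|+1) ≤ 1 := by
        have := mul_le_mul_of_nonneg_right h4 (le_of_lt (by positivity : (0:ℝ) < |a|+1))
        rwa [inv_mul_cancel₀ (by positivity : (|a|+1:ℝ) ≠ 0)] at this
      calc eN (v - ((s:ℝ):ℂ) • (C *ᵥ u)) ≤ eN v + eN (((s:ℝ):ℂ) • (C *ᵥ u)) := eN_sub_le _ _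
        _ ≤ 1 + s * (|a|+1) := by
            rw [hv1, eN_smul, Complex.norm_real, Real.norm_eq_abs, abs_of_nonneg hs0]
            have h8 : s * eN (C *ᵥ u) ≤ s * (|a|+1) := mul_le_mul_of_nonneg_left h3 hs0
            linarith only [h8]
        _ ≤ 2 := by linarith only [h5]
    have hkey : d * G⁻¹ ≤ Q ^ k' * 2 := by
      have h1 := abs_det_le hk1 M0 v hv1
      rw [Nat.add_sub_cancel, hM0det] at h1
      calc d * G⁻¹ ≤ ‖M0‖^k' * eN (M0 *ᵥ v) := h1
        _ ≤ Q^k' * 2 := by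
            refine mul_le_mul (pow_le_pow_left₀ (norm_nonneg _) hM0norm _) hM0v
              (eN_nonneg _) (by positivity)
    have hdle : d ≤ 2 * Q^k' * G := by
      calc d = d * G⁻¹ * G := by rw [mul_assoc, inv_mul_cancel₀ hG0.ne', mul_one]
        _ ≤ Q^k' * 2 * G := mul_le_mul_of_nonneg_right hkey hG0.le
        _ = 2 * Q^k' * G := by ring
    have hone : 1 ≤ T * (2 * (|a|+1)^(k'+1) * Q^k') := by
      have h1 : G ≤ T * c * (2 * Q^k' * G) := by
        calc G = T * c * d := hGTcd
          _ ≤ T * c * (2 * Q^k' * G) :=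
            mul_le_mul_of_nonneg_left hdle (mul_nonneg hT0.le hc0.le)
      have h2 : 1 * G ≤ (T * c * (2*Q^k')) * G := by
        rw [one_mul]
        calc G ≤ T * c * (2 * Q^k' * G) := h1
          _ = (T * c * (2*Q^k')) * G := by ring
      have h3 : 1 ≤ T * c * (2 * Q^k') := le_of_mul_le_mul_right h2 hG0
      have h4 : T * c * (2*Q^k') ≤ T * (|a|+1)^(k'+1) * (2*Q^k') := by
        refine mul_le_mul_of_nonneg_right (mul_le_mul_of_nonneg_left hcle hT0.le) ?_
        positivity
      calc (1:ℝ) ≤ T * c * (2*Q^k') := h3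
        _ ≤ T * (|a|+1)^(k'+1) * (2*Q^k') := h4
        _ = T * (2*(|a|+1)^(k'+1) * Q^k') := by ring
    have hzp : ((1 : ℤ) - ((k'+1 : ℕ) : ℤ)) = -((k' : ℕ) : ℤ) := by push_cast; ring
    rw [hzp]
    rw [_root_.zpow_neg]
    rw [zpow_natCast]
    rw [one_div, ← mul_inv, ← one_div]
    rw [div_le_iff₀ (mul_pos (by positivity : (0:ℝ) < 16 * |a|) (pow_pos (mul_pos hP0 hN0) k'))]
    rcases le_or_gt (1/(|a|+1)) N with hNsub | hNsub
    · have hge1 : 1 ≤ N * (|a|+1) := by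
        rw [div_le_iff₀ (by positivity : (0:ℝ) < |a|+1)] at hNsub
        linarith only [hNsub]
      have hQP : (|a|+1) * Q ≤ P * N := by
        have h6 : (|a|+1) * 1 ≤ (|a|+1) * (N * (|a|+1)) :=
          mul_le_mul_of_nonneg_left hge1 (by positivity)
        rw [hQ, hP]; linarith only [h6]
      have hQPk : ((|a|+1) * Q)^k' ≤ (P*N)^k' :=
        pow_le_pow_left₀ (mul_nonneg (by positivity) hQ0) hQP k'
      have hmono : 2 * (|a|+1)^(k'+1) * Q^k' ≤ 16*|a| * (P*N)^k' := by
        have e1 : 2 * (|a|+1)^(k'+1) * Q^k' = 2*(|a|+1) * (((|a|+1))*Q)^k' := by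
          rw [mul_pow, pow_succ]; ring
        rw [e1]
        calc 2*(|a|+1) * ((|a|+1)*Q)^k' ≤ 2*(|a|+1) * (P*N)^k' :=
              mul_le_mul_of_nonneg_left hQPk (by positivity)
          _ ≤ 16*|a| * (P*N)^k' := by
              refine mul_le_mul_of_nonneg_right (by linarith only [ha]) ?_
              exact pow_nonneg (mul_nonneg hP0.le hNn) k'
      calc (1:ℝ) ≤ T * (2*(|a|+1)^(k'+1) * Q^k') := hone
        _ ≤ T * (16*|a| * (P*N)^k') := mul_le_mul_of_nonneg_left hmono hT0.le
    · exfalso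
      have hQN1 : (|a|+1) * N ≤ 1 := by
        rw [lt_div_iff₀ (by positivity : (0:ℝ) < |a|+1)] at hNsub
        linarith only [hNsub]
      have hQ2 : Q ≤ 2 := by rw [hQ]; linarith only [hQN1]
      have hone2 : 1 ≤ T * (2*(|a|+1)^(k'+1) * 2^k') := by
        refine le_trans hone (mul_le_mul_of_nonneg_left ?_ hT0.le)
        have h9 : Q^k' ≤ 2^k' := pow_le_pow_left₀ hQ0 hQ2 k'
        exact mul_le_mul_of_nonneg_left h9 (by positivity)
      set β := (|a| - 1)/P with hβ
      have hβ0 : 0 ≤ β := by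
        rw [hβ]; exact div_nonneg (by linarith) hP0.le
      have h2b : 2*(|a|+1)*β ≤ 1 := by
        rw [hβ, hP, ← mul_div_assoc, div_le_one (by positivity)]
        nlinarith only [abs_nonneg a]
      have hfin : T * (2*(|a|+1)^(k'+1)*2^k')
          ≤ (1/(16*|a|)*β^k') * (2*(|a|+1)^(k'+1)*2^k') := by
        refine mul_le_mul_of_nonneg_right hdet (by positivity)
      have heq : (1/(16*|a|)*β^k') * (2*(|a|+1)^(k'+1)*2^k')
          = (2*(|a|+1)/(16*|a|)) * (2*(|a|+1)*β)^k' := by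
        have hcollect : (2*(|a|+1)*β)^k' = 2^k' * (|a|+1)^k' * β^k' := by
          rw [mul_pow, mul_pow]
        rw [hcollect, pow_succ]
        ring
      have hlt1 : (2*(|a|+1)/(16*|a|)) * (2*(|a|+1)*β)^k' < 1 := by
        have hp1 : (2*(|a|+1)*β)^k' ≤ 1 :=
          pow_le_one₀ (mul_nonneg (by positivity) hβ0) h2b
        have hp2 : 2*(|a|+1)/(16*|a|) < 1 := by
          rw [div_lt_one (by linarith)]; linarith
        have hp3 : (0:ℝ) ≤ 2*(|a|+1)/(16*|a|) := by positivity
        have h10 := mul_le_mul_of_nonneg_left hp1 hp3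
        rw [mul_one] at h10
        linarith only [h10, hp2]
      rw [heq] at hfin
      linarith only [hone2, hfin, hlt1]
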